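/- Let c ≤ -2 be a real number and a_c = (1 + √(1 - 4c))/2. If w is a real number with |w| ≤ a_c, then every complex solution z of z² + c = w is real and satisfies |z| ≤ a_c. -/
import Mathlib


theorem stmt_6 (c : ℝ) (hc : c ≤ -2)
    (a : ℝ) (ha : a = (1 + Real.sqrt (1 - 4*c))/2)
    (w : ℝ) (hw : |w| ≤ a) (z : ℂ) (hz : z^2 + (c : ℂ) = (w : ℂ)) :
    ∃ r : ℝ, z = (r : ℂ) ∧ |r| ≤ a := by
  have h1 : (0:ℝ) ≤ 1 - 4*c := by linarith
  have hs : Real.sqrt (1 - 4*c) ^ 2 = 1 - 4*c := Real.sq_sqrt h1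
  have hsnn : 0 ≤ Real.sqrt (1 - 4*c) := Real.sqrt_nonneg _
  have ha2 : a^2 = a - c := by rw [ha]; nlinarith [hs]
  have ha3 : 2 ≤ a := by nlinarith [abs_nonneg w]
  have hw1 : -a ≤ w := neg_le_of_abs_le hw
  have hw2 : w ≤ a := le_of_abs_le hw
  have hwc : 0 ≤ w - c := by nlinarith
  set t := Real.sqrt (w - c) with ht
  have ht2 : t ^ 2 = w - c := Real.sq_sqrt hwc
  have htnn : 0 ≤ t := Real.sqrt_nonneg _
  have hta : t ≤ a := by nlinarith
  have htc : ((t : ℂ)) ^ 2 = ((w : ℂ)) - ((c : ℂ)) := by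
    have : ((t ^ 2 : ℝ) : ℂ) = ((w - c : ℝ) : ℂ) := by rw [ht2]
    push_cast at this
    exact this
  have hz2 : (z - t) * (z + t) = 0 := by
    have : z ^ 2 = (t : ℂ) ^ 2 := by rw [htc]; linear_combination hz
    linear_combination this
  rcases mul_eq_zero.mp hz2 with h | h
  · refine ⟨t, ?_, ?_⟩
    · have : z = (t : ℂ) := by linear_combination h
      exact this
    · rw [abs_of_nonneg htnn]; exact hta
  · refine ⟨-t, ?_, ?_⟩
    · have : z = -(t : ℂ) := by linear_combination h
      push_cast; exact this
    · rw [abs_neg, abs_of_nonneg htnn]; exact hta
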